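/- arXiv:2011.11875 — 4 statements merged into one kernel-verified Lean document; each statement's English description precedes it below -/
import Mathlib

section
/- Let p be an odd prime and N = 2p. Then 2·S_A(4) ≡ (3·4^p − 5) + (4^p + 5)·((4^N − 1)/15) − ((2/p)·4^p + 1)·G_p (mod 4^N − 1), where (2/p) is the Legendre symbol of 2 modulo p. -/
lemma sum_range_two_mul' (n : ℕ) (f : ℕ → ℤ) :
    ∑ i ∈ Finset.range (2*n), f i
      = ∑ j ∈ Finset.range n, (f (2*j) + f (2*j+1)) := by
  induction n with
  | zero => simp
  | succ n ih =>
    have h : 2 * (n+1) = (2*n + 1) + 1 := by ring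
    rw [h, Finset.sum_range_succ, Finset.sum_range_succ, ih, Finset.sum_range_succ]
    rw [add_assoc]

lemma sum_modEq' {n : ℤ} {s : Finset ℕ} {f g : ℕ → ℤ} (h : ∀ i ∈ s, f i ≡ g i [ZMOD n]) :
    (∑ i ∈ s, f i) ≡ ∑ i ∈ s, g i [ZMOD n] := by
  classical
  induction s using Finset.induction_on with
  | empty => rfl
  | insert _ _ hx ih =>
    rw [Finset.sum_insert hx, Finset.sum_insert hx]
    exact (h _ (Finset.mem_insert_self _ _)).add
      (ih fun i hi => h i (Finset.mem_insert_of_mem hi))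

lemma mod_two_cases' {x p : ℕ} (hx : x < 2*p) : x % p = x ∨ x % p + p = x := by
  rcases Nat.lt_or_ge x p with h|h
  · left; exact Nat.mod_eq_of_lt h
  · right
    rw [Nat.mod_eq_sub_mod h, Nat.mod_eq_of_lt (by omega)]
    omega

lemma pow_mod_cong' (p : ℕ) (k : ℕ) :
    (4:ℤ)^k ≡ 4^(k % (2*p)) [ZMOD 4 ^ (2 * p) - 1] := by
  conv_lhs => rw [← Nat.div_add_mod k (2*p)]
  rw [pow_add, show (4:ℤ)^(2*p*(k/(2*p))) = ((4:ℤ)^(2*p))^(k/(2*p)) from pow_mul 4 _ _]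
  have h1 : (4:ℤ)^(2*p) ≡ 1 [ZMOD 4 ^ (2 * p) - 1] := Int.modEq_iff_dvd.mpr ⟨-1, by ring⟩
  calc ((4:ℤ)^(2*p))^(k/(2*p)) * 4^(k%(2*p))
      ≡ 1^(k/(2*p)) * 4^(k%(2*p)) [ZMOD 4 ^ (2 * p) - 1] := (h1.pow _).mul_right _
    _ = 4^(k%(2*p)) := by rw [one_pow, one_mul]



/-- The quaternary cyclotomic sequence of period 2p from Kim et al.:
`a 0 = 0`, `a p = 2`; for odd `i ≠ p`, value `0`/`1` according to Legendre symbol `(i/p) = ±1`;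
for even `i > 0`, value `2`/`3` according to `((i/2)/p) = ±1`. -/
def seqA (p : ℕ) [Fact p.Prime] (i : ℕ) : ℤ :=
  if i = 0 then 0
  else if i = p then 2
  else if i % 2 = 1 then (if legendreSym p i = 1 then 0 else 1)
  else if legendreSym p (i / 2) = 1 then 2 else 3

/-- `S_A(4) = Σ_{i=0}^{2p-1} a(i)·4^i`. -/
def SA (p : ℕ) [Fact p.Prime] : ℤ := ∑ i ∈ Finset.range (2 * p), seqA p i * 4 ^ i

/-- The Gauss sum `G_p = Σ_{a=1}^{p-1} (a/p)·4^{2a}`. -/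
def Gp (p : ℕ) [Fact p.Prime] : ℤ := ∑ a ∈ Finset.Icc 1 (p - 1), legendreSym p a * 4 ^ (2 * a)

/-- `2·S_A(4) ≡ (3·4^p − 5) + (4^p + 5)·((4^N−1)/15) − ((2/p)·4^p + 1)·G_p
(mod 4^N − 1)` for `N = 2p`. -/
theorem stmt1 (p : ℕ) [Fact p.Prime] (hodd : Odd p) :
    2 * SA p ≡ (3 * 4 ^ p - 5) + (4 ^ p + 5) * ((4 ^ (2 * p) - 1) / 15)
      - ((legendreSym p 2) * 4 ^ p + 1) * Gp p [ZMOD 4 ^ (2 * p) - 1] := by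
  obtain ⟨m, hm⟩ := hodd
  have hp : p.Prime := Fact.out
  have hp1 : 1 < p := hp.one_lt
  have hmp : m < p := by omega
  -- abbreviations
  set E : ℤ := ∑ j ∈ Finset.range p, (16:ℤ)^j with hEdef
  set G' : ℤ := ∑ a ∈ Finset.Ico 1 p, (legendreSym p (a:ℤ)) * 16^a with hGdef
  set T' : ℤ := ∑ j ∈ (Finset.range p).erase m,
      (legendreSym p ((2*j+1 : ℕ) : ℤ)) * 4^(2*j+1) with hTdef
  -- basic facts about E
  have hE : 15 * E = 4^(2*p) - 1 := by
    have h16 : (4:ℤ)^(2*p) = 16^p := by rw [pow_mul]; norm_num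
    rw [h16, hEdef]
    linear_combination geom_sum_mul (16:ℤ) p
  have hdiv : ((4:ℤ)^(2*p) - 1)/15 = E := by
    rw [← hE, Int.mul_ediv_cancel_left E (by norm_num)]
  have hIcoE : ∑ j ∈ Finset.Ico 1 p, (16:ℤ)^j = E - 1 := by
    have : E = (16:ℤ)^0 + ∑ j ∈ Finset.Ico 1 p, (16:ℤ)^j := by
      rw [hEdef, Finset.range_eq_Ico, Finset.sum_eq_sum_Ico_succ_bot (by omega : 0 < p)]
    rw [pow_zero] at this
    linarith
  -- Gp rewritten
  have hG : Gp p = G' := by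
    rw [Gp, show Finset.Icc 1 (p-1) = Finset.Ico 1 p from by
      rw [← Finset.Ico_add_one_right_eq_Icc]; congr 1; omega]
    apply Finset.sum_congr rfl
    intro a _
    rw [pow_mul]; norm_num
  -- Legendre values
  have hχval : ∀ j : ℕ, ¬ p ∣ j → legendreSym p (j:ℤ) = 1 ∨ legendreSym p (j:ℤ) = -1 := by
    intro j hj
    apply legendreSym.eq_one_or_neg_one
    rw [Int.cast_natCast, Ne, ZMod.natCast_eq_zero_iff]
    exact hj
  -- even part
  have Heven : ∑ j ∈ Finset.range p, 2 * (seqA p (2*j) * 4^(2*j))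
      = 5*(E-1) - G' := by
    have h0 : ∑ j ∈ Finset.range p, 2 * (seqA p (2*j) * 4^(2*j))
        = ∑ j ∈ Finset.Ico 1 p, (5 - legendreSym p (j:ℤ)) * 16^j := by
      rw [Finset.range_eq_Ico, Finset.sum_eq_sum_Ico_succ_bot (by omega : 0 < p)]
      have hz : 2 * (seqA p (2*0) * 4^(2*0)) = 0 := by simp [seqA]
      rw [hz, zero_add]
      apply Finset.sum_congr rfl
      intro j hj
      rw [Finset.mem_Ico] at hj
      have h1 : ¬ (2*j = 0) := by omega
      have h2 : ¬ (2*j = p) := by omega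
      have h3 : ¬ ((2*j) % 2 = 1) := by omega
      have h4 : ((2*j : ℕ) : ℤ)/2 = (j : ℤ) := by push_cast; omega
      have hnd : ¬ p ∣ j := fun hd => by have := Nat.le_of_dvd (by omega) hd; omega
      rcases hχval j hnd with h|h
      · simp only [seqA, if_neg h1, if_neg h2, if_neg h3]
        rw [h4, if_pos h, h, pow_mul]; norm_num; ring
      · have h' : ¬ (legendreSym p ((j:ℕ):ℤ) = 1) := by rw [h]; norm_num
        simp only [seqA, if_neg h1, if_neg h2, if_neg h3]
        rw [h4, if_neg h', h, pow_mul]; norm_num; ring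
    rw [h0]
    have h5 : ∑ j ∈ Finset.Ico 1 p, (5 - legendreSym p (j:ℤ)) * 16^j
        = (∑ j ∈ Finset.Ico 1 p, 5*(16:ℤ)^j) - ∑ j ∈ Finset.Ico 1 p,
            (legendreSym p (j:ℤ)) * 16^j := by
      rw [← Finset.sum_sub_distrib]
      apply Finset.sum_congr rfl
      intro j _; ring
    rw [h5, ← Finset.mul_sum, hIcoE, ← hGdef]
  -- odd part
  have hmmem : m ∈ Finset.range p := by rw [Finset.mem_range]; omega
  have Hrange4 : ∑ j ∈ Finset.range p, (4:ℤ)^(2*j+1) = 4*E := by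
    have : ∀ j ∈ Finset.range p, (4:ℤ)^(2*j+1) = 4*(16:ℤ)^j := by
      intro j _
      rw [pow_succ, pow_mul]; norm_num; ring
    rw [Finset.sum_congr rfl this, ← Finset.mul_sum, ← hEdef]
  have Herase4 : ∑ j ∈ (Finset.range p).erase m, (4:ℤ)^(2*j+1) = 4*E - 4^p := by
    have h := Finset.sum_erase_add (Finset.range p) (fun j => (4:ℤ)^(2*j+1)) hmmem
    beta_reduce at h
    rw [Hrange4] at h
    have hpm : 2*m+1 = p := by omega
    rw [hpm] at h
    linarith
  have Hodd : ∑ j ∈ Finset.range p, 2 * (seqA p (2*j+1) * 4^(2*j+1))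
      = 4*4^p + ((4*E - 4^p) - T') := by
    have h := Finset.sum_erase_add (Finset.range p)
      (fun j => 2 * (seqA p (2*j+1) * 4^(2*j+1))) hmmem
    beta_reduce at h
    rw [← h]
    have hterm : 2 * (seqA p (2*m+1) * 4^(2*m+1)) = 4*4^p := by
      have hpm : 2*m+1 = p := by omega
      rw [hpm]
      have : seqA p p = 2 := by
        simp [seqA, show ¬ (p = 0) by omega]
      rw [this]; ring
    have hsum : ∑ j ∈ (Finset.range p).erase m, 2 * (seqA p (2*j+1) * 4^(2*j+1))
        = (4*E - 4^p) - T' := by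
      have h0 : ∑ j ∈ (Finset.range p).erase m, 2 * (seqA p (2*j+1) * 4^(2*j+1))
          = ∑ j ∈ (Finset.range p).erase m,
              ((1 - legendreSym p ((2*j+1 : ℕ):ℤ)) * 4^(2*j+1)) := by
        apply Finset.sum_congr rfl
        intro j hj
        rw [Finset.mem_erase, Finset.mem_range] at hj
        have h1 : ¬ (2*j+1 = 0) := by omega
        have h2 : ¬ (2*j+1 = p) := by omega
        have h3 : (2*j+1) % 2 = 1 := by omega
        have hnd : ¬ p ∣ (2*j+1) := by
          intro hd
          rcases hd with ⟨c, hc⟩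
          have hc2 : c < 2 := by
            by_contra hcon
            push_neg at hcon
            have : p*2 ≤ p*c := Nat.mul_le_mul_left p hcon
            omega
          interval_cases c <;> omega
        rcases hχval (2*j+1) hnd with h|h
        · simp only [seqA, if_neg h1, if_neg h2, if_pos h3]
          rw [if_pos h, h]; ring
        · have h' : ¬ (legendreSym p (((2*j+1):ℕ):ℤ) = 1) := by rw [h]; norm_num
          simp only [seqA, if_neg h1, if_neg h2, if_pos h3]
          rw [if_neg h', h]; ring
      rw [h0]
      have h5 : ∑ j ∈ (Finset.range p).erase m,
            ((1 - legendreSym p ((2*j+1 : ℕ):ℤ)) * 4^(2*j+1))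
          = (∑ j ∈ (Finset.range p).erase m, (4:ℤ)^(2*j+1)) - T' := by
        rw [hTdef, ← Finset.sum_sub_distrib]
        apply Finset.sum_congr rfl
        intro j _; ring
      rw [h5, Herase4]
    rw [hterm, hsum]; ring
  -- exact value of 2*SA
  have key : 2 * SA p = (5*(E-1) - G') + (4*4^p + ((4*E - 4^p) - T')) := by
    rw [SA, Finset.mul_sum, sum_range_two_mul' p (fun i => 2 * (seqA p i * 4^i))]
    rw [show (∑ j ∈ Finset.range p,
        (2 * (seqA p (2*j) * 4^(2*j)) + 2 * (seqA p (2*j+1) * 4^(2*j+1))))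
      = (∑ j ∈ Finset.range p, 2 * (seqA p (2*j) * 4^(2*j)))
        + ∑ j ∈ Finset.range p, 2 * (seqA p (2*j+1) * 4^(2*j+1)) from
        Finset.sum_add_distrib]
    rw [Heven, Hodd]
  -- K1
  have hK1 : (4^(2*p) - 1 : ℤ) ∣ ((4:ℤ)^p - 4) * E := by
    have h4p : (4:ℤ)^p = 4 * 16^m := by
      rw [hm, pow_succ, pow_mul]
      norm_num; ring
    have h15 : (15:ℤ) ∣ 16^m - 1 := by
      have := sub_dvd_pow_sub_pow (16:ℤ) 1 m
      norm_num at this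
      exact this
    rcases h15 with ⟨c, hc⟩
    refine ⟨4*c, ?_⟩
    rw [← hE]
    linear_combination (4*E) * hc + E * h4p
  -- K2
  have hK2 : (legendreSym p 2) * 4^p * G' ≡ T' [ZMOD 4 ^ (2 * p) - 1] := by
    have step1 : (legendreSym p 2) * 4^p * G'
        = ∑ a ∈ Finset.Ico 1 p,
            (legendreSym p 2 * legendreSym p (a:ℤ)) * 4^(2*a+p) := by
      rw [hGdef, Finset.mul_sum]
      apply Finset.sum_congr rfl
      intro a _
      rw [pow_add, pow_mul]
      norm_num; ring
    have step2 : (∑ a ∈ Finset.Ico 1 p,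
          (legendreSym p 2 * legendreSym p (a:ℤ)) * 4^(2*a+p))
        ≡ ∑ a ∈ Finset.Ico 1 p,
            (legendreSym p ((2*((a+m)%p)+1 : ℕ):ℤ)) * 4^(2*((a+m)%p)+1)
          [ZMOD 4 ^ (2 * p) - 1] := by
      apply sum_modEq'
      intro a ha
      rw [Finset.mem_Ico] at ha
      have hcase := mod_two_cases' (show a+m < 2*p by omega)
      have hjlt : (a+m) % p < p := Nat.mod_lt _ (by omega)
      have hχeq : legendreSym p 2 * legendreSym p (a:ℤ)
          = legendreSym p ((2*((a+m)%p)+1 : ℕ):ℤ) := by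
        rw [← legendreSym.mul]
        rw [legendreSym.mod p (2*(a:ℤ)), legendreSym.mod p ((2*((a+m)%p)+1 : ℕ):ℤ)]
        congr 1
        have hmeq : (2*(a:ℤ)) ≡ ((2*((a+m)%p)+1 : ℕ):ℤ) [ZMOD (p:ℤ)] := by
          rcases hcase with h|h
          · exact Int.modEq_iff_dvd.mpr ⟨1, by omega⟩
          · exact Int.modEq_iff_dvd.mpr ⟨-1, by omega⟩
        exact hmeq
      have hexp : (2*a+p) % (2*p) = 2*((a+m)%p)+1 := by
        rcases hcase with h|h
        · rw [show 2*a+p = 2*((a+m)%p)+1 from by omega]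
          exact Nat.mod_eq_of_lt (by omega)
        · rw [show 2*a+p = (2*((a+m)%p)+1) + 2*p from by omega, Nat.add_mod_right]
          exact Nat.mod_eq_of_lt (by omega)
      rw [hχeq]
      have hpw := pow_mod_cong' p (2*a+p)
      rw [hexp] at hpw
      exact hpw.mul_left _
    have step3 : (∑ a ∈ Finset.Ico 1 p,
          (legendreSym p ((2*((a+m)%p)+1 : ℕ):ℤ)) * 4^(2*((a+m)%p)+1)) = T' := by
      rw [hTdef]
      apply Finset.sum_nbij' (i := fun a => (a+m)%p) (j := fun b => (b + (p-m)) % p)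
      · intro a ha
        rw [Finset.mem_Ico] at ha
        rw [Finset.mem_erase, Finset.mem_range]
        have h1 : (a+m) % p < p := Nat.mod_lt _ (by omega)
        rcases mod_two_cases' (show a+m < 2*p by omega) with h|h <;> omega
      · intro b hb
        rw [Finset.mem_erase, Finset.mem_range] at hb
        rw [Finset.mem_Ico]
        have h1 : (b+(p-m)) % p < p := Nat.mod_lt _ (by omega)
        rcases mod_two_cases' (show b+(p-m) < 2*p by omega) with h|h <;> omega
      · intro a ha
        rw [Finset.mem_Ico] at ha
        rw [Nat.mod_add_mod, show (a+m)+(p-m) = a+p from by omega, Nat.add_mod_right]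
        exact Nat.mod_eq_of_lt (by omega)
      · intro b hb
        rw [Finset.mem_erase, Finset.mem_range] at hb
        rw [Nat.mod_add_mod, show (b+(p-m))+m = b+p from by omega, Nat.add_mod_right]
        exact Nat.mod_eq_of_lt (by omega)
      · intro a _
        rfl
    rw [step1]
    calc (∑ a ∈ Finset.Ico 1 p,
          (legendreSym p 2 * legendreSym p (a:ℤ)) * 4^(2*a+p))
        ≡ ∑ a ∈ Finset.Ico 1 p,
            (legendreSym p ((2*((a+m)%p)+1 : ℕ):ℤ)) * 4^(2*((a+m)%p)+1)
          [ZMOD 4 ^ (2 * p) - 1] := step2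
      _ = T' := step3
  -- conclude
  rw [key, hdiv, hG]
  apply Int.modEq_iff_dvd.mpr
  have hdiff : ((3 * 4 ^ p - 5) + (4 ^ p + 5) * E - ((legendreSym p 2) * 4 ^ p + 1) * G')
      - ((5*(E-1) - G') + (4*4^p + ((4*E - 4^p) - T')))
      = ((4:ℤ)^p - 4) * E + (T' - (legendreSym p 2) * 4^p * G') := by ring
  rw [hdiff]
  exact dvd_add hK1 (Int.modEq_iff_dvd.mp hK2)
end

section
/- Let p be an odd prime and N = 2p. Then G_p^2 ≡ (−1/p)·(p − (4^N − 1)/15) (mod 4^N − 1), where (−1/p) is the Legendre symbol of −1 modulo p. -/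
open Finset

private lemma sum_zmod_val' {p : ℕ} [NeZero p] {M : Type*} [AddCommMonoid M] (f : ℕ → M) :
    ∑ a : ZMod p, f a.val = ∑ i ∈ Finset.range p, f i := by
  refine Finset.sum_nbij' (fun a => a.val) (fun i => (i : ZMod p)) ?_ ?_ ?_ ?_ ?_ <;>
    simp +contextual [ZMod.val_cast_of_lt, ZMod.natCast_val, ZMod.cast_id, ZMod.val_lt,
      Finset.mem_range, Nat.mod_eq_of_lt]

private lemma gauss_sq' (p : ℕ) [Fact p.Prime] (hp2 : p ≠ 2) {R : Type*} [CommRing R]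
    (ζ : R) (hζ : ζ ^ p = 1) :
    (∑ a : ZMod p, ((quadraticChar (ZMod p) a : ℤ) : R) * ζ ^ a.val) ^ 2
      = ((quadraticChar (ZMod p) (-1) : ℤ) : R) *
        ((p : R) - ∑ a : ZMod p, ζ ^ a.val) := by
  have hp : p.Prime := Fact.out
  haveI : NeZero p := ⟨hp.ne_zero⟩
  set χ : MulChar (ZMod p) ℤ := quadraticChar (ZMod p) with hχ
  set e : ZMod p → R := fun a => ζ ^ a.val with he_def
  have hζmod : ∀ k : ℕ, ζ ^ (k % p) = ζ ^ k := by
    intro k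
    conv_rhs => rw [← Nat.div_add_mod k p]
    rw [pow_add, pow_mul, hζ, one_pow, one_mul]
  have he : ∀ a b : ZMod p, e (a + b) = e a * e b := by
    intro a b
    show ζ ^ (a + b).val = ζ ^ a.val * ζ ^ b.val
    rw [ZMod.val_add, hζmod, pow_add]
  have he0 : e 0 = 1 := by
    show ζ ^ (0 : ZMod p).val = 1
    simp
  set T : R := ∑ a : ZMod p, e a with hT
  have hχsum : ∑ c : ZMod p, χ c = 0 :=
    quadraticChar_sum_zero (by rw [ZMod.ringChar_zmod_n]; exact hp2)
  have hχsq : ∀ a : ZMod p, a ≠ 0 → χ a * χ a = 1 := by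
    intro a ha
    have := quadraticChar_sq_one (F := ZMod p) ha
    rwa [sq] at this
  -- indicator sum
  have hind : ∀ x : R, (∑ a : ZMod p, if a = 0 then x else 0) = x := by
    intro x
    rw [Finset.sum_ite_eq' Finset.univ (0 : ZMod p) (fun _ => x)]
    simp
  -- Step 1: expand the square and reindex b = a * c
  have key : (∑ a : ZMod p, ((χ a : ℤ) : R) * e a) ^ 2
      = ∑ a : ZMod p, ∑ c : ZMod p, ((χ a * χ (a * c) : ℤ) : R) * e (a + a * c) := by
    rw [sq, Finset.sum_mul_sum]
    refine Finset.sum_congr rfl fun a _ => ?_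
    rcases eq_or_ne a 0 with rfl | ha
    · simp [hχ]
    · rw [(Fintype.sum_bijective _ (mulLeft_bijective₀ a ha)
        (fun c => ((χ a * χ (a * c) : ℤ) : R) * e (a + a * c))
        (fun b => ((χ a : ℤ) : R) * e a * (((χ b : ℤ) : R) * e b))
        (fun c => ?_)).symm]
      show ((χ a * χ (a * c) : ℤ) : R) * e (a + a * c)
          = ((χ a : ℤ) : R) * e a * (((χ (a * c) : ℤ) : R) * e (a * c))
      rw [he]
      push_cast
      ring
  rw [key, Finset.sum_comm]
  -- Step 2: evaluate inner sums
  have inner_neg : ∑ a : ZMod p, ((χ a * χ (a * (-1)) : ℤ) : R) * e (a + a * (-1))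
      = ((χ (-1) : ℤ) : R) * ((p : R) - 1) := by
    have hterm : ∀ a : ZMod p, ((χ a * χ (a * (-1)) : ℤ) : R) * e (a + a * (-1))
        = ((χ (-1) : ℤ) : R) * (1 - if a = 0 then 1 else 0) := by
      intro a
      rcases eq_or_ne a 0 with rfl | ha
      · simp [hχ]
      · have h1 : a + a * (-1) = 0 := by ring
        have h2 : χ a * χ (a * (-1)) = χ (-1) := by
          rw [map_mul]
          linear_combination χ (-1) * hχsq a ha
        rw [h1, he0, h2, if_neg ha]
        ring
    rw [Finset.sum_congr rfl fun a _ => hterm a, ← Finset.mul_sum]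
    congr 1
    rw [Finset.sum_sub_distrib, hind, Finset.sum_const]
    simp [ZMod.card]
  have inner_ne : ∀ c : ZMod p, c ≠ -1 →
      ∑ a : ZMod p, ((χ a * χ (a * c) : ℤ) : R) * e (a + a * c)
        = ((χ c : ℤ) : R) * (T - 1) := by
    intro c hc
    have h1c : (1 + c) ≠ 0 := by
      intro h
      exact hc (by linear_combination h)
    have hterm : ∀ a : ZMod p, ((χ a * χ (a * c) : ℤ) : R) * e (a + a * c)
        = ((χ c : ℤ) : R) * e ((1 + c) * a) - (if a = 0 then ((χ c : ℤ) : R) else 0) := by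
      intro a
      rcases eq_or_ne a 0 with rfl | ha
      · simp [hχ, he0]
      · have h2 : χ a * χ (a * c) = χ c := by
          rw [map_mul, ← mul_assoc, hχsq a ha, one_mul]
        have h3 : a + a * c = (1 + c) * a := by ring
        rw [h2, h3, if_neg ha, sub_zero]
    rw [Finset.sum_congr rfl fun a _ => hterm a, Finset.sum_sub_distrib, ← Finset.mul_sum]
    rw [Fintype.sum_bijective _ (mulLeft_bijective₀ (1 + c) h1c)
      (fun a => e ((1 + c) * a)) e (fun a => rfl)]
    rw [hind (((χ c : ℤ)) : R), ← hT]
    ring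
  -- Step 3: assemble
  rw [← Finset.sum_erase_add _ _ (Finset.mem_univ (-1 : ZMod p)), inner_neg]
  rw [Finset.sum_congr rfl fun c hcm => inner_ne c (Finset.ne_of_mem_erase hcm)]
  rw [← Finset.sum_mul]
  have hsum_erase : ∑ c ∈ Finset.univ.erase (-1 : ZMod p), ((χ c : ℤ) : R)
      = -(((χ (-1) : ℤ)) : R) := by
    have h : ∑ c ∈ Finset.univ.erase (-1 : ZMod p), χ c = -(χ (-1)) := by
      have h := Finset.sum_erase_add Finset.univ (fun c => χ c) (Finset.mem_univ (-1 : ZMod p))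
      rw [hχsum] at h
      linarith
    calc ∑ c ∈ Finset.univ.erase (-1 : ZMod p), ((χ c : ℤ) : R)
        = ((∑ c ∈ Finset.univ.erase (-1 : ZMod p), χ c : ℤ) : R) := by push_cast; rfl
      _ = -(((χ (-1) : ℤ)) : R) := by rw [h]; push_cast; ring
  rw [hsum_erase]
  ring

/-- `G_p² ≡ (−1/p)·(p − (4^N−1)/15) (mod 4^N−1)` for `N = 2p`. -/
theorem stmt2 (p : ℕ) [Fact p.Prime] (hodd : Odd p) :
    Gp p ^ 2 ≡ (legendreSym p (-1)) * ((p : ℤ) - (4 ^ (2 * p) - 1) / 15)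
      [ZMOD 4 ^ (2 * p) - 1] := by
  have hp : p.Prime := Fact.out
  haveI : NeZero p := ⟨hp.ne_zero⟩
  have hp2 : p ≠ 2 := by
    rintro rfl
    simp [Nat.odd_iff] at hodd
  have hgeom : (4 : ℤ) ^ (2 * p) - 1 = 15 * ∑ i ∈ range p, (16 : ℤ) ^ i := by
    have h := geom_sum_mul (16 : ℤ) p
    rw [pow_mul]
    norm_num at h ⊢
    linarith
  have hdiv : ((4 : ℤ) ^ (2 * p) - 1) / 15 = ∑ i ∈ range p, (16 : ℤ) ^ i := by
    rw [hgeom, Int.mul_ediv_cancel_left _ (by norm_num)]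
  set m : ℕ := 16 ^ p - 1 with hm
  have h16p : (1 : ℕ) ≤ 16 ^ p := Nat.one_le_pow _ _ (by norm_num)
  have hmZ : ((m : ℤ)) = 4 ^ (2 * p) - 1 := by
    rw [hm]
    push_cast [h16p]
    rw [pow_mul]
    norm_num
  have hdiv' : ((m : ℤ)) / 15 = ∑ i ∈ range p, (16 : ℤ) ^ i := by
    rw [hmZ]; exact hdiv
  rw [← hmZ, ← ZMod.intCast_eq_intCast_iff]
  set R := ZMod m with hR
  have hζ : (16 : R) ^ p = 1 := by
    have h2 : (16 ^ p : ℕ) = m + 1 := by omega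
    have h1 : ((16 ^ p : ℕ) : R) = (16 : R) ^ p := by push_cast; ring
    rw [← h1, h2]
    push_cast
    simp
  -- identify Gp with the abstract Gauss sum
  have hG : ((Gp p : ℤ) : R)
      = ∑ a : ZMod p, ((quadraticChar (ZMod p) a : ℤ) : R) * (16 : R) ^ a.val := by
    have h2 : Gp p = ∑ i ∈ range p, legendreSym p i * 4 ^ (2 * i) := by
      rw [Gp]
      refine Finset.sum_subset ?_ ?_
      · intro x hx
        simp only [Finset.mem_Icc] at hx
        simp only [Finset.mem_range]
        omega
      · intro x hx hx'
        simp only [Finset.mem_range] at hx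
        simp only [Finset.mem_Icc] at hx'
        have : x = 0 := by omega
        subst this
        simp [legendreSym.at_zero]
    have h3 : ∑ a : ZMod p, ((quadraticChar (ZMod p) a : ℤ) : R) * (16 : R) ^ a.val
        = ∑ i ∈ range p, ((legendreSym p (i : ℤ) : ℤ) : R) * (16 : R) ^ i := by
      rw [← sum_zmod_val' (fun i => ((legendreSym p (i : ℤ) : ℤ) : R) * (16 : R) ^ i)]
      refine Finset.sum_congr rfl fun a _ => ?_
      congr 2
      simp only [legendreSym]
      congr 1
      push_cast
      simp [ZMod.natCast_val, ZMod.cast_id]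
    rw [h2, h3]
    rw [Int.cast_sum]
    push_cast
    refine Finset.sum_congr rfl fun i _ => ?_
    rw [pow_mul]
    norm_num
  have habs := gauss_sq' p hp2 (16 : R) hζ
  have hTsum : (∑ a : ZMod p, (16 : R) ^ a.val)
      = ((∑ i ∈ range p, (16 : ℤ) ^ i : ℤ) : R) := by
    rw [sum_zmod_val' (fun i => (16 : R) ^ i)]
    rw [Int.cast_sum]
    push_cast
    rfl
  have hleg : legendreSym p (-1) = quadraticChar (ZMod p) (-1 : ZMod p) := by
    simp [legendreSym]
  push_cast
  rw [hG, habs, hTsum, hdiv', hleg]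
end

section
/- Let p be an odd prime. Then d_− := gcd(S_A(4), 4^p − 1) equals 1. -/
open Finset

set_option linter.unusedSectionVars false

section Aux

variable {p r : ℕ} [Fact p.Prime] [Fact r.Prime]

private lemma sum_range_even_odd {M : Type*} [AddCommMonoid M] (f : ℕ → M) (n : ℕ) :
    ∑ i ∈ range (2 * n), f i = ∑ j ∈ range n, (f (2 * j) + f (2 * j + 1)) := by
  induction n with
  | zero => simp
  | succ n ih =>
      have h2 : 2 * (n + 1) = (2 * n + 1) + 1 := by ring
      rw [h2, Finset.sum_range_succ, Finset.sum_range_succ, ih, Finset.sum_range_succ, add_assoc]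

private lemma sum_range_zmod (F : ZMod p → ZMod r) :
    ∑ j ∈ range p, F (j : ZMod p) = ∑ x : ZMod p, F x := by
  refine Finset.sum_nbij' (fun j => (j : ZMod p)) (fun x => x.val) ?_ ?_ ?_ ?_ ?_
  · intro a _; exact Finset.mem_univ _
  · intro x _; exact Finset.mem_range.mpr (ZMod.val_lt x)
  · intro a ha; exact ZMod.val_cast_of_lt (Finset.mem_range.mp ha)
  · intro x _; exact ZMod.natCast_rightInverse x
  · intro a _; rfl

private lemma two_ne_zero_zmod (hr : r ≠ 2) : (2 : ZMod r) ≠ 0 := by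
  intro h0
  have hd : r ∣ 2 := by
    exact_mod_cast (ZMod.natCast_eq_zero_iff 2 r).mp (by exact_mod_cast h0)
  exact hr ((Nat.prime_dvd_prime_iff_eq Fact.out Nat.prime_two).mp hd)

private lemma two_ne_zero_zmod_p (hp : p ≠ 2) : (2 : ZMod p) ≠ 0 := by
  intro h0
  have hd : p ∣ 2 := by
    exact_mod_cast (ZMod.natCast_eq_zero_iff 2 p).mp (by exact_mod_cast h0)
  exact hp ((Nat.prime_dvd_prime_iff_eq Fact.out Nat.prime_two).mp hd)

private lemma aff_sum (hp2 : p ≠ 2) (χ : MulChar (ZMod p) (ZMod r))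
    (ψ : AddChar (ZMod p) (ZMod r)) :
    ∑ x : ZMod p, χ (2 * x + 1) * ψ (2 * x + 1) = gaussSum χ ψ := by
  have h2 : (2 : ZMod p) ≠ 0 := two_ne_zero_zmod_p hp2
  let e : ZMod p ≃ ZMod p := (Equiv.mulLeft₀ 2 h2).trans (Equiv.addRight 1)
  have he := Equiv.sum_comp e (fun y => χ y * ψ y)
  rw [gaussSum, ← he]
  apply Finset.sum_congr rfl
  intro x _
  simp [e, Equiv.mulLeft₀]

/-- The quadratic character of `ZMod p` with values in `ZMod r`. -/
noncomputable def chiC (p r : ℕ) [Fact p.Prime] : MulChar (ZMod p) (ZMod r) :=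
  (quadraticChar (ZMod p)).ringHomComp (Int.castRingHom (ZMod r))

private lemma chiC_nat (j : ℕ) :
    ((legendreSym p j : ℤ) : ZMod r) = chiC p r ((j : ZMod p)) := by
  simp only [chiC, MulChar.ringHomComp_apply, legendreSym, Int.cast_natCast,
    eq_intCast, Int.cast_id]

private lemma chiC_quad : (chiC p r).IsQuadratic :=
  (quadraticChar_isQuadratic (ZMod p)).comp _

private lemma chiC_ne_one (hp : p ≠ 2) (hr : r ≠ 2) : chiC p r ≠ 1 := by
  have hchar : ringChar (ZMod p) ≠ 2 := by
    rw [ZMod.ringChar_zmod_n]; exact hp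
  obtain ⟨b, hb⟩ := quadraticChar_exists_neg_one hchar
  have hb0 : b ≠ 0 := by
    intro h0; rw [h0, quadraticChar_zero] at hb; norm_num at hb
  intro h
  have := congrArg (fun χ : MulChar (ZMod p) (ZMod r) => χ b) h
  simp only [chiC, MulChar.ringHomComp_apply, hb,
    MulChar.one_apply (isUnit_iff_ne_zero.mpr hb0)] at this
  have h2 : (2 : ZMod r) = 0 := by
    have : ((-1 : ℤ) : ZMod r) = 1 := this
    push_cast at this
    linear_combination -this
  exact two_ne_zero_zmod hr h2

private lemma chiC_int (a : ℤ) :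
    ((legendreSym p a : ℤ) : ZMod r) = chiC p r ((a : ZMod p)) := by
  simp only [chiC, MulChar.ringHomComp_apply, legendreSym, eq_intCast, Int.cast_id]

private lemma chiC_two_cases (hp : p ≠ 2) :
    chiC p r 2 = 1 ∨ chiC p r 2 = -1 := by
  have h20 : ((2 : ℤ) : ZMod p) ≠ 0 := by
    exact_mod_cast two_ne_zero_zmod_p hp
  have hc := chiC_int (p := p) (r := r) 2
  have h2 : ((2 : ℤ) : ZMod p) = (2 : ZMod p) := by norm_cast
  rw [h2] at hc
  rcases legendreSym.eq_one_or_neg_one p h20 with h | h <;> rw [h] at hc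
  · left; rw [← hc]; norm_num
  · right; rw [← hc]; push_cast; ring

private lemma two_seqA_even (hodd : Odd p) {j : ℕ} (h1 : 1 ≤ j) (h2 : j < p) :
    2 * seqA p (2 * j) = 5 - legendreSym p j := by
  have hne0 : ¬ (2 * j = 0) := by omega
  have hnep : ¬ (2 * j = p) := by
    intro h; rw [← h] at hodd
    exact (Nat.not_odd_iff_even.mpr ⟨j, by ring⟩) hodd
  have hj0 : ((j : ℤ) : ZMod p) ≠ 0 := by
    intro h0
    have hd : (p : ℤ) ∣ (j : ℤ) := (ZMod.intCast_zmod_eq_zero_iff_dvd _ _).mp h0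
    have hd' : p ∣ j := by exact_mod_cast hd
    have := Nat.le_of_dvd (by omega) hd'
    omega
  have hdiv : ((2 * j : ℕ) : ℤ) / 2 = (j : ℤ) := by push_cast; omega
  rw [seqA, if_neg hne0, if_neg hnep, if_neg (by omega : ¬ (2 * j) % 2 = 1), hdiv]
  rcases legendreSym.eq_one_or_neg_one p hj0 with h | h
  · rw [if_pos h, h]; norm_num
  · rw [if_neg (by rw [h]; norm_num), h]; norm_num

private lemma two_seqA_odd {j : ℕ} (hne : 2 * j + 1 ≠ p) (hlt : j < p) :
    2 * seqA p (2 * j + 1) = 1 - legendreSym p (2 * j + 1) := by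
  have hj0 : (((2 * j + 1 : ℕ) : ℤ) : ZMod p) ≠ 0 := by
    intro h0
    have hd : (p : ℤ) ∣ ((2 * j + 1 : ℕ) : ℤ) := (ZMod.intCast_zmod_eq_zero_iff_dvd _ _).mp h0
    have hd' : p ∣ 2 * j + 1 := by exact_mod_cast hd
    obtain ⟨c, hc⟩ := hd'
    have hc2 : c < 2 := by
      by_contra hge
      have : p * 2 ≤ p * c := Nat.mul_le_mul_left p (by omega)
      omega
    interval_cases c <;> omega
  rw [seqA, if_neg (by omega : ¬ (2 * j + 1 = 0)), if_neg hne,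
    if_pos (by omega : (2 * j + 1) % 2 = 1)]
  rcases legendreSym.eq_one_or_neg_one p hj0 with h | h
  · rw [if_pos h]; push_cast at h; rw [h]; norm_num
  · rw [if_neg (by rw [h]; norm_num)]; push_cast at h; rw [h]; norm_num

private lemma key_identity (hodd : Odd p) (h4 : (4 : ZMod r) ^ p = 1) :
    (2 : ZMod r) * ((SA p : ℤ) : ZMod r)
      = 9 * (∑ j ∈ range p, ((4 : ZMod r) ^ 2) ^ j) - 2
        - (1 + chiC p r 2) * gaussSum (chiC p r) (AddChar.zmodChar p h4) := by
  have hp2 : p ≠ 2 := by rintro rfl; exact (by decide : ¬ Odd 2) hodd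
  have hp3 : 3 ≤ p := by
    have := (Fact.out : p.Prime).two_le; omega
  obtain ⟨m, hm⟩ := hodd
  set θ : ZMod r := 4 with hθ
  set χ : MulChar (ZMod p) (ZMod r) := chiC p r with hχ
  set ψ : AddChar (ZMod p) (ZMod r) := AddChar.zmodChar p h4 with hψdef
  have hψ : ∀ a : ℕ, ψ ((a : ZMod p)) = θ ^ a := fun a => AddChar.zmodChar_apply' h4 a
  -- the summand functions
  set f : ℕ → ZMod r := fun i => ((2 * seqA p i : ℤ) : ZMod r) * θ ^ i with hf
  set g : ℕ → ZMod r := fun j =>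
    ((5 - legendreSym p (j : ℤ) : ℤ) : ZMod r) * θ ^ (2 * j)
      + ((1 - legendreSym p ((2 * j + 1 : ℕ) : ℤ) : ℤ) : ZMod r) * θ ^ (2 * j + 1) with hg
  -- Step 1: 2 * SA = ∑ f
  have step1 : (2 : ZMod r) * ((SA p : ℤ) : ZMod r) = ∑ i ∈ range (2 * p), f i := by
    rw [SA]
    push_cast
    rw [Finset.mul_sum]
    exact Finset.sum_congr rfl fun i _ => by push_cast [hf]; ring
  -- Step 2: pair up, compare with g
  have hmlt : m < p := by omega
  have step2 : ∑ i ∈ range (2 * p), f i = ∑ j ∈ range p, g j - 2 := by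
    rw [sum_range_even_odd f p]
    have hdiff : ∑ j ∈ range p, (g j - (f (2 * j) + f (2 * j + 1))) = 2 := by
      have h0m : (0 : ℕ) ≠ m := by omega
      rw [Finset.sum_eq_add 0 m h0m]
      · -- value at 0 plus value at m
        have e0 : g 0 - (f (2 * 0) + f (2 * 0 + 1)) = 5 := by
          have hs0 : seqA p 0 = 0 := by rw [seqA]; norm_num
          have hodd0 : 2 * seqA p (2 * 0 + 1) = 1 - legendreSym p ((2 * 0 + 1 : ℕ) : ℤ) :=
            two_seqA_odd (by omega) (by omega)
          rw [hg, hf]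
          simp only [Nat.mul_zero, Nat.zero_add, pow_zero, mul_one, Nat.mul_zero]
          rw [show ((0:ℕ) : ℤ) = (0:ℤ) by norm_num, legendreSym.at_zero, hs0, ← hodd0]
          push_cast
          ring
        have em : g m - (f (2 * m) + f (2 * m + 1)) = -3 := by
          have heven : 2 * seqA p (2 * m) = 5 - legendreSym p (m : ℤ) :=
            two_seqA_even ⟨m, by omega⟩ (by omega) hmlt
          have hsp : seqA p (2 * m + 1) = 2 := by
            rw [seqA, if_neg (by omega : ¬ (2 * m + 1 = 0)), if_pos (by omega : 2 * m + 1 = p)]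
          have hlegp : legendreSym p ((2 * m + 1 : ℕ) : ℤ) = 0 := by
            rw [legendreSym.eq_zero_iff]
            rw [show ((2 * m + 1 : ℕ) : ℤ) = ((p : ℕ) : ℤ) by push_cast; omega]
            push_cast
            exact ZMod.natCast_self p
          have hθp : θ ^ (2 * m + 1) = 1 := by rw [show 2 * m + 1 = p by omega, h4]
          simp only [hg, hf]
          rw [hsp, hlegp, hθp, ← heven]
          push_cast
          ring
        rw [e0, em]; norm_num
      · intro c hc hc0
        have hc1 : 1 ≤ c := by omega
        have hclt : c < p := Finset.mem_range.mp hc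
        have heven : 2 * seqA p (2 * c) = 5 - legendreSym p (c : ℤ) :=
          two_seqA_even ⟨m, by omega⟩ hc1 hclt
        have hodd' : 2 * seqA p (2 * c + 1) = 1 - legendreSym p ((2 * c + 1 : ℕ) : ℤ) :=
          two_seqA_odd (by omega) hclt
        simp only [hg, hf]
        rw [← heven, ← hodd']
        push_cast
        ring
      · intro h; exact absurd (Finset.mem_range.mpr (by omega : 0 < p)) h
      · intro h; exact absurd (Finset.mem_range.mpr hmlt) h
    have := Finset.sum_sub_distrib (s := range p)
      (f := g) (g := fun j => f (2 * j) + f (2 * j + 1))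
    rw [this] at hdiff
    linear_combination -hdiff
  -- Step 3: character sums
  have hθψ2 : ∀ j : ℕ, θ ^ (2 * j) = ψ (2 * (j : ZMod p)) := by
    intro j
    rw [show (2 * (j : ZMod p)) = (((2 * j : ℕ) : ZMod p)) by push_cast; ring, hψ]
  have hθψ2' : ∀ j : ℕ, θ ^ (2 * j + 1) = ψ (2 * (j : ZMod p) + 1) := by
    intro j
    rw [show (2 * (j : ZMod p) + 1) = (((2 * j + 1 : ℕ) : ZMod p)) by push_cast; ring, hψ]
  -- even character sum
  have hsum_even : ∑ j ∈ range p, ((legendreSym p (j : ℤ) : ℤ) : ZMod r) * θ ^ (2 * j)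
      = χ 2 * gaussSum χ ψ := by
    have h1 : ∑ j ∈ range p, ((legendreSym p (j : ℤ) : ℤ) : ZMod r) * θ ^ (2 * j)
        = ∑ x : ZMod p, χ x * ψ (2 * x) := by
      rw [← sum_range_zmod (fun x => χ x * ψ (2 * x))]
      exact Finset.sum_congr rfl fun j _ => by rw [chiC_nat j, hθψ2 j]
    have h2u : IsUnit (2 : ZMod p) := isUnit_iff_ne_zero.mpr (two_ne_zero_zmod_p hp2)
    have h2 : ∑ x : ZMod p, χ x * ψ (2 * x) = gaussSum χ (AddChar.mulShift ψ 2) := by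
      rw [gaussSum]
      exact Finset.sum_congr rfl fun x _ => by rw [AddChar.mulShift_apply]
    have h3 := gaussSum_mulShift χ ψ h2u.unit
    rw [IsUnit.unit_spec] at h3
    have hsq : χ 2 * χ 2 = 1 := by
      rcases chiC_two_cases (r := r) hp2 with h | h <;> rw [h] <;> norm_num
    calc ∑ j ∈ range p, ((legendreSym p (j : ℤ) : ℤ) : ZMod r) * θ ^ (2 * j)
        = gaussSum χ (AddChar.mulShift ψ 2) := by rw [h1, h2]
      _ = (χ 2 * χ 2) * gaussSum χ (AddChar.mulShift ψ 2) := by rw [hsq, one_mul]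
      _ = χ 2 * gaussSum χ ψ := by rw [mul_assoc, h3]
  -- odd character sum
  have hsum_odd : ∑ j ∈ range p,
      ((legendreSym p ((2 * j + 1 : ℕ) : ℤ) : ℤ) : ZMod r) * θ ^ (2 * j + 1)
      = gaussSum χ ψ := by
    have h1 : ∑ j ∈ range p, ((legendreSym p ((2 * j + 1 : ℕ) : ℤ) : ℤ) : ZMod r) * θ ^ (2 * j + 1)
        = ∑ x : ZMod p, χ (2 * x + 1) * ψ (2 * x + 1) := by
      rw [← sum_range_zmod (fun x => χ (2 * x + 1) * ψ (2 * x + 1))]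
      refine Finset.sum_congr rfl fun j _ => ?_
      rw [chiC_nat (2 * j + 1), hθψ2' j]
      congr 2
      push_cast
      ring
    rw [h1, aff_sum hp2 χ ψ]
  -- pure power sums
  have hpow : ∀ j : ℕ, θ ^ (2 * j) = (θ ^ 2) ^ j := fun j => by
    rw [← pow_mul]
  have hpow' : ∀ j : ℕ, θ ^ (2 * j + 1) = θ * (θ ^ 2) ^ j := fun j => by
    rw [pow_succ, ← pow_mul]; ring
  -- expand ∑ g
  have step3 : ∑ j ∈ range p, g j
      = 9 * (∑ j ∈ range p, (θ ^ 2) ^ j) - (1 + χ 2) * gaussSum χ ψ := by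
    have expand : ∀ j ∈ range p, g j
        = (5 * (θ ^ 2) ^ j + θ * (θ ^ 2) ^ j)
          - (((legendreSym p (j : ℤ) : ℤ) : ZMod r) * θ ^ (2 * j))
          - (((legendreSym p ((2 * j + 1 : ℕ) : ℤ) : ℤ) : ZMod r) * θ ^ (2 * j + 1)) := by
      intro j _
      rw [hg]
      push_cast
      rw [hpow j, hpow' j]
      ring
    rw [Finset.sum_congr rfl expand]
    rw [Finset.sum_sub_distrib, Finset.sum_sub_distrib, hsum_even, hsum_odd]
    rw [Finset.sum_add_distrib, ← Finset.mul_sum, ← Finset.mul_sum]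
    have hθ4 : θ = 4 := rfl
    rw [hθ4]
    ring
  rw [step1, step2, step3]
  simp only [hθ]
  ring

end Aux

/-- `d₋ = gcd(S_A(4), 4^p − 1) = 1`. -/
theorem stmt4 (p : ℕ) [Fact p.Prime] (hodd : Odd p) :
    Int.gcd (SA p) (4 ^ p - 1) = 1 := by
  by_contra hne
  obtain ⟨r, hr, hrdvd⟩ := Nat.exists_prime_and_dvd hne
  haveI : Fact r.Prime := ⟨hr⟩
  have hp2 : p ≠ 2 := by rintro rfl; exact (by decide : ¬ Odd 2) hodd
  have hp3 : 3 ≤ p := by have := (Fact.out : p.Prime).two_le; omega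
  have hrS : (r : ℤ) ∣ SA p :=
    dvd_trans (Int.natCast_dvd_natCast.mpr hrdvd) (Int.gcd_dvd_left _ _)
  have hrM : (r : ℤ) ∣ 4 ^ p - 1 :=
    dvd_trans (Int.natCast_dvd_natCast.mpr hrdvd) (Int.gcd_dvd_right _ _)
  have hSA0 : ((SA p : ℤ) : ZMod r) = 0 := (ZMod.intCast_zmod_eq_zero_iff_dvd _ _).mpr hrS
  have h4 : (4 : ZMod r) ^ p = 1 := by
    have h0 : ((4 ^ p - 1 : ℤ) : ZMod r) = 0 := (ZMod.intCast_zmod_eq_zero_iff_dvd _ _).mpr hrM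
    push_cast at h0
    linear_combination h0
  have hr2 : r ≠ 2 := by
    rintro rfl
    have h2 : (2 : ℤ) ∣ 4 ^ p - 1 := by exact_mod_cast hrM
    have h2' : (2 : ℤ) ∣ 4 ^ p := dvd_pow (by norm_num) (by omega)
    have := dvd_sub h2' h2
    norm_num at this
  have hkey := key_identity (r := r) hodd h4
  rw [hSA0, mul_zero] at hkey
  set χ : MulChar (ZMod p) (ZMod r) := chiC p r with hχ
  set ψ : AddChar (ZMod p) (ZMod r) := AddChar.zmodChar p h4 with hψ
  by_cases hr3 : r = 3
  · -- r = 3 : the geometric factor 9 vanishes and the Gauss sum is 0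
    subst hr3
    have h3 : ((3 : ℕ) : ZMod 3) = 0 := ZMod.natCast_self 3
    push_cast at h3
    have hθ1 : (4 : ZMod 3) = 1 := by linear_combination h3
    have hg0 : gaussSum χ ψ = 0 := by
      rw [gaussSum]
      have : ∀ x : ZMod p, χ x * ψ x = χ x := by
        intro x
        rw [hψ, AddChar.zmodChar_apply, hθ1, one_pow, mul_one]
      rw [Finset.sum_congr rfl fun x _ => this x]
      exact MulChar.sum_eq_zero_of_ne_one (chiC_ne_one hp2 (by decide))
    rw [hg0, mul_zero, sub_zero, show (9 : ZMod 3) = 0 by linear_combination 3 * h3,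
      zero_mul, zero_sub] at hkey
    have h10 : (1 : ZMod 3) = 0 := by linear_combination h3 - hkey
    exact one_ne_zero h10
  · -- r ≠ 3 : geometric sum vanishes
    have hθne : (4 : ZMod r) ≠ 1 := by
      intro h
      have h30 : ((3 : ℕ) : ZMod r) = 0 := by push_cast; linear_combination h
      have : r ∣ 3 := (ZMod.natCast_eq_zero_iff 3 r).mp h30
      exact hr3 ((Nat.prime_dvd_prime_iff_eq hr (by norm_num)).mp this)
    have hord : orderOf (4 : ZMod r) = p := orderOf_eq_prime h4 hθne
    have hθ2 : (4 : ZMod r) ^ 2 ≠ 1 := by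
      intro h
      have hd := orderOf_dvd_of_pow_eq_one h
      rw [hord] at hd
      have := Nat.le_of_dvd (by norm_num) hd
      omega
    have hE : ∑ j ∈ range p, ((4 : ZMod r) ^ 2) ^ j = 0 := by
      have hgeo := geom_sum_mul ((4 : ZMod r) ^ 2) p
      have hx : ((4 : ZMod r) ^ 2) ^ p - 1 = 0 := by
        rw [← pow_mul, mul_comm 2 p, pow_mul, h4, one_pow, sub_self]
      rw [hx] at hgeo
      rcases mul_eq_zero.mp hgeo with h | h
      · exact h
      · exact absurd (by linear_combination h) hθ2
    rw [hE, mul_zero, zero_sub] at hkey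
    -- now 0 = -2 - (1 + χ 2) * gaussSum χ ψ
    have h2r : (2 : ZMod r) ≠ 0 := two_ne_zero_zmod hr2
    -- r ≥ 2p + 1
    have h40 : (4 : ZMod r) ≠ 0 := by
      intro h
      rw [h, zero_pow (by omega : p ≠ 0)] at h4
      exact zero_ne_one h4
    have hfermat : (4 : ZMod r) ^ (r - 1) = 1 := ZMod.pow_card_sub_one_eq_one h40
    have hpdvd : p ∣ r - 1 := hord ▸ orderOf_dvd_of_pow_eq_one hfermat
    have h2dvd : 2 ∣ r - 1 := by
      have := hr.eq_one_or_self_of_dvd 2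
      have hro : r % 2 = 1 := Nat.odd_iff.mp (hr.odd_of_ne_two hr2)
      omega
    have hcop : Nat.Coprime 2 p :=
      (Nat.prime_two.coprime_iff_not_dvd).mpr (by have := Nat.odd_iff.mp hodd; omega)
    have h2pd : 2 * p ∣ r - 1 :=
      Nat.Coprime.mul_dvd_of_dvd_of_dvd hcop h2dvd hpdvd
    have hrbig : 2 * p + 1 ≤ r := by
      have hr1 : 1 ≤ r - 1 := by have := hr.two_le; omega
      have := Nat.le_of_dvd (by omega) h2pd
      omega
    rcases chiC_two_cases (r := r) hp2 with hc2 | hc2 <;> rw [← hχ] at hc2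
    · -- χ 2 = 1 : the Gauss sum must be -1, contradiction via gaussSum_sq
      rw [hc2] at hkey
      have hgm1 : gaussSum χ ψ = -1 := by
        have h20 : (2 : ZMod r) * (gaussSum χ ψ + 1) = 0 := by linear_combination hkey
        rcases mul_eq_zero.mp h20 with h | h
        · exact absurd h h2r
        · linear_combination h
      have hprim : ψ.IsPrimitive := by
        have hpr : IsPrimitiveRoot (4 : ZMod r) p := hord ▸ IsPrimitiveRoot.orderOf (4 : ZMod r)
        exact AddChar.zmodChar_primitive_of_primitive_root p hpr
      have hsq : gaussSum χ ψ ^ 2 = χ (-1) * (Fintype.card (ZMod p)) :=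
        gaussSum_sq (chiC_ne_one hp2 hr2) (chiC_quad (p := p) (r := r)) hprim
      rw [hgm1, ZMod.card p] at hsq
      have hsq' : (1 : ZMod r) = χ (-1) * (p : ZMod r) := by linear_combination hsq
      rcases chiC_quad (p := p) (r := r) (-1) with h | h | h <;> rw [← hχ] at h <;>
        rw [h] at hsq'
      · rw [zero_mul] at hsq'
        exact one_ne_zero hsq'
      · rw [one_mul] at hsq'
        have hd : ((p - 1 : ℕ) : ZMod r) = 0 := by
          push_cast [Nat.cast_sub (by omega : 1 ≤ p)]
          linear_combination -hsq'
        have : r ∣ p - 1 := (ZMod.natCast_eq_zero_iff _ _).mp hd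
        have := Nat.le_of_dvd (by omega) this
        omega
      · have hd : ((p + 1 : ℕ) : ZMod r) = 0 := by
          push_cast
          linear_combination hsq'
        have : r ∣ p + 1 := (ZMod.natCast_eq_zero_iff _ _).mp hd
        have := Nat.le_of_dvd (by omega) this
        omega
    · -- χ 2 = -1 : immediate contradiction
      rw [hc2] at hkey
      have : (2 : ZMod r) = 0 := by linear_combination hkey
      exact h2r this
end

section
/- Let p be an odd prime. If 5 divides p − 2, then gcd(S_A(4), 4^{2p} − 1) is divisible by 5 but not by 25. -/
open Finset

private lemma sum_range_two_mul_aux {M : Type*} [AddCommMonoid M] (n : ℕ) (f : ℕ → M) :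
    ∑ i ∈ range (2 * n), f i =
      ∑ j ∈ range n, f (2 * j) + ∑ j ∈ range n, f (2 * j + 1) := by
  induction n with
  | zero => simp
  | succ n ih =>
    have h : 2 * (n + 1) = (2 * n + 1) + 1 := by ring
    rw [h, sum_range_succ, sum_range_succ, ih, sum_range_succ (fun j => f (2 * j)) n,
      sum_range_succ (fun j => f (2 * j + 1)) n]
    abel

private lemma sum_range_castZMod {M : Type*} [AddCommMonoid M] (p : ℕ) [NeZero p]
    (F : ZMod p → M) : ∑ j ∈ range p, F (j : ZMod p) = ∑ x : ZMod p, F x := by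
  refine Finset.sum_nbij' (fun j => ((j : ℕ) : ZMod p)) (fun x => x.val) ?_ ?_ ?_ ?_ ?_
  · intro a _; exact mem_univ _
  · intro x _; exact mem_range.mpr (ZMod.val_lt x)
  · intro a ha; exact ZMod.val_cast_of_lt (mem_range.mp ha)
  · intro x _; exact ZMod.natCast_rightInverse x
  · intro a _; rfl

private lemma leg_sum (p : ℕ) [Fact p.Prime] (hp2 : p ≠ 2) :
    ∑ j ∈ range p, legendreSym p (j : ℕ) = 0 := by
  haveI : NeZero p := ⟨(Fact.out : p.Prime).ne_zero⟩
  have key : ∀ j : ℕ, legendreSym p (j : ℕ) = quadraticChar (ZMod p) ((j : ℕ) : ZMod p) := by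
    intro j; rw [legendreSym]; norm_cast
  rw [Finset.sum_congr rfl (fun j _ => key j),
    sum_range_castZMod p (fun x => quadraticChar (ZMod p) x)]
  exact quadraticChar_sum_zero (by rwa [ZMod.ringChar_zmod_n])

private lemma leg_sum_odd (p : ℕ) [Fact p.Prime] (hp2 : p ≠ 2) :
    ∑ j ∈ range p, legendreSym p ((2 * j + 1 : ℕ) : ℤ) = 0 := by
  haveI : NeZero p := ⟨(Fact.out : p.Prime).ne_zero⟩
  have h2 : (2 : ZMod p) ≠ 0 := by
    intro h
    have : (p : ℕ) ∣ 2 := by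
      have := (ZMod.natCast_eq_zero_iff 2 p).mp (by exact_mod_cast h)
      exact this
    have := (Nat.prime_dvd_prime_iff_eq (Fact.out : p.Prime) Nat.prime_two).mp this
    exact hp2 this
  have key : ∀ j : ℕ, legendreSym p ((2 * j + 1 : ℕ) : ℤ)
      = quadraticChar (ZMod p) (2 * ((j : ℕ) : ZMod p) + 1) := by
    intro j; rw [legendreSym]; congr 1; push_cast; ring
  rw [Finset.sum_congr rfl (fun j _ => key j),
    sum_range_castZMod p (fun x => quadraticChar (ZMod p) (2 * x + 1))]
  have hbij : Function.Bijective (fun x : ZMod p => 2 * x + 1) := by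
    have hinj : Function.Injective (fun x : ZMod p => 2 * x + 1) := by
      intro a b h
      exact mul_left_cancel₀ h2 (add_right_cancel h)
    exact Finite.injective_iff_bijective.mp hinj
  rw [Fintype.sum_bijective _ hbij _ (fun y => quadraticChar (ZMod p) y) (fun x => rfl)]
  exact quadraticChar_sum_zero (by rwa [ZMod.ringChar_zmod_n])

private lemma SA_mod5 (p : ℕ) [Fact p.Prime] (hodd : Odd p) (hp5 : p % 5 = 2) :
    ((SA p : ℤ) : ZMod 5) = 0 := by
  have hp : p.Prime := Fact.out
  have hpo : p % 2 = 1 := Nat.odd_iff.mp hodd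
  have hge : 2 ≤ p := hp.two_le
  have hp2 : p ≠ 2 := by omega
  haveI : NeZero p := ⟨hp.ne_zero⟩
  rw [SA]
  push_cast
  rw [sum_range_two_mul_aux p (fun i => ((seqA p i : ℤ) : ZMod 5) * 4 ^ i)]
  have heven : ∀ j ∈ range p,
      ((seqA p (2 * j) : ℤ) : ZMod 5) * 4 ^ (2 * j)
        = 2 * ((legendreSym p (j : ℕ) : ℤ) : ZMod 5) := by
    intro j hj
    have hjlt : j < p := mem_range.mp hj
    have h4 : (4 : ZMod 5) ^ (2 * j) = 1 := by
      rw [pow_mul, show (4 : ZMod 5) ^ 2 = 1 from by decide, one_pow]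
    rw [h4, mul_one]
    rcases Nat.eq_zero_or_pos j with rfl | hj0
    · simp [seqA, legendreSym.at_zero]
    · have hne : ¬ (2 * j = 0) := by omega
      have h2p : ¬ (2 * j = p) := by omega
      have hm : ¬ ((2 * j) % 2 = 1) := by omega
      have hdiv : ((2 * j : ℕ) : ℤ) / 2 = (j : ℤ) := by push_cast; omega
      simp only [seqA, if_neg hne, if_neg h2p, if_neg hm, hdiv]
      have hjz : ((j : ℤ) : ZMod p) ≠ 0 := by
        intro h
        rw [ZMod.intCast_zmod_eq_zero_iff_dvd] at h
        have : (p : ℕ) ∣ j := by exact_mod_cast h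
        have := Nat.le_of_dvd hj0 this
        omega
      rcases legendreSym.eq_one_or_neg_one (p := p) hjz with h | h
      · rw [h, if_pos rfl]; push_cast; ring
      · rw [h, if_neg (by norm_num)]; push_cast; decide
  have hoddt : ∀ j ∈ range p,
      ((seqA p (2 * j + 1) : ℤ) : ZMod 5) * 4 ^ (2 * j + 1)
        = -(3 - 3 * ((legendreSym p ((2 * j + 1 : ℕ) : ℤ) : ℤ) : ZMod 5)
            - (if j = p / 2 then 1 else 0)) := by
    intro j hj
    have hjlt : j < p := mem_range.mp hj
    have h4 : (4 : ZMod 5) ^ (2 * j + 1) = -1 := by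
      rw [pow_succ, pow_mul, show (4 : ZMod 5) ^ 2 = 1 from by decide, one_pow]
      decide
    rw [h4, mul_neg_one, neg_inj]
    by_cases hp' : 2 * j + 1 = p
    · have hj2 : j = p / 2 := by omega
      have hlegp : legendreSym p ((p : ℕ) : ℤ) = 0 := by
        rw [legendreSym.eq_zero_iff]
        push_cast
        exact ZMod.natCast_self p
      rw [hp']
      simp only [seqA, if_neg hp.ne_zero, if_pos rfl, if_pos hj2, hlegp]
      norm_num
    · have hne : ¬ (2 * j + 1 = 0) := by omega
      have hm : (2 * j + 1) % 2 = 1 := by omega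
      have hj2 : ¬ (j = p / 2) := by omega
      simp only [seqA, if_neg hne, if_neg hp', if_pos hm, if_neg hj2]
      have hjz : (((2 * j + 1 : ℕ) : ℤ) : ZMod p) ≠ 0 := by
        intro h
        rw [ZMod.intCast_zmod_eq_zero_iff_dvd] at h
        have hdvd : (p : ℕ) ∣ 2 * j + 1 := by exact_mod_cast h
        have hle : p ≤ 2 * j + 1 := Nat.le_of_dvd (by omega) hdvd
        obtain ⟨k, hk⟩ := hdvd
        have hk2 : k < 2 := by
          by_contra hc
          have : p * 2 ≤ p * k := Nat.mul_le_mul_left p (by omega)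
          omega
        interval_cases k <;> omega
      rcases legendreSym.eq_one_or_neg_one (p := p) hjz with h | h
      · rw [h, if_pos rfl]; push_cast; decide
      · rw [h, if_neg (by norm_num)]; push_cast; decide
  rw [Finset.sum_congr rfl heven, Finset.sum_congr rfl hoddt]
  rw [← Finset.mul_sum, ← Int.cast_sum, leg_sum p hp2]
  simp only [Finset.sum_neg_distrib, Finset.sum_sub_distrib, ← Finset.mul_sum, ← Int.cast_sum,
    leg_sum_odd p hp2, Finset.sum_const, Finset.card_range, nsmul_eq_mul,
    Finset.sum_ite_eq' (range p) (p / 2) (fun _ => (1 : ZMod 5))]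
  have hmem : p / 2 ∈ range p := mem_range.mpr (by omega)
  rw [if_pos hmem]
  have hpc : ((p : ℕ) : ZMod 5) = 2 := by
    rw [← ZMod.natCast_mod p 5, hp5]
    rfl
  rw [hpc]
  norm_num
  decide

/-- if `5 ∣ p − 2`, then `gcd(S_A(4), 4^{2p} − 1)` is divisible by `5`
but not by `25`. -/
theorem stmt12 (p : ℕ) [Fact p.Prime] (hodd : Odd p) (h5 : 5 ∣ p - 2) :
    5 ∣ Int.gcd (SA p) (4 ^ (2 * p) - 1) ∧ ¬ (25 ∣ Int.gcd (SA p) (4 ^ (2 * p) - 1)) := by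
  have hp : p.Prime := Fact.out
  have hpo : p % 2 = 1 := Nat.odd_iff.mp hodd
  have hge : 2 ≤ p := hp.two_le
  have hp5 : p % 5 = 2 := by omega
  have hSA : (5 : ℤ) ∣ SA p :=
    (ZMod.intCast_zmod_eq_zero_iff_dvd (SA p) 5).mp (SA_mod5 p hodd hp5)
  have hb : (5 : ℤ) ∣ 4 ^ (2 * p) - 1 := by
    have h0 : ((4 ^ (2 * p) - 1 : ℤ) : ZMod 5) = 0 := by
      push_cast
      rw [pow_mul, show (4 : ZMod 5) ^ 2 = 1 from by decide, one_pow]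
      ring
    exact (ZMod.intCast_zmod_eq_zero_iff_dvd _ 5).mp h0
  constructor
  · have : (5 : ℤ) ∣ (Int.gcd (SA p) (4 ^ (2 * p) - 1) : ℤ) := Int.dvd_coe_gcd hSA hb
    exact_mod_cast this
  · intro h25
    have h1 : (25 : ℤ) ∣ 4 ^ (2 * p) - 1 :=
      dvd_trans (by exact_mod_cast h25 : (25 : ℤ) ∣ (Int.gcd (SA p) (4 ^ (2 * p) - 1) : ℤ)) (Int.gcd_dvd_right _ _)
    have h2 : ((4 ^ (2 * p) - 1 : ℤ) : ZMod 25) = 0 :=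
      (ZMod.intCast_zmod_eq_zero_iff_dvd _ 25).mpr h1
    obtain ⟨m, hm⟩ : ∃ m, p = 10 * m + 7 := ⟨p / 10, by omega⟩
    push_cast at h2
    rw [hm] at h2
    have h6 : (4 : ZMod 25) ^ (2 * (10 * m + 7)) = 6 := by
      have he : 2 * (10 * m + 7) = 10 * (2 * m + 1) + 4 := by ring
      rw [he, pow_add, pow_mul, show (4 : ZMod 25) ^ 10 = 1 from by decide, one_pow]
      decide
    rw [h6] at h2
    exact absurd h2 (by decide)
end
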